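/- For n ≥ 1, the number of plane trees with n edges, i old leaves, and j young leaves is (1/n)·C(n,i)·C(n-i,j)·C(n-i-j,i-1). -/

import Mathlib

/-- A plane tree: a root together with an ordered (possibly empty) list of subtrees. -/
inductive PlaneTree where
  | node : List PlaneTree → PlaneTree

namespace PlaneTree

/-- The number of edges of a plane tree. -/
def edges : PlaneTree → ℕ
  | node ts => (ts.attach.map (fun t => edges t.1 + 1)).sum
decreasing_by have := List.sizeOf_lt_of_mem t.2; simp at *; omega

/-- Indicator that a tree is a single vertex (i.e. the corresponding child is a leaf). -/
def isLeafInd : PlaneTree → ℕ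
  | node [] => 1
  | node (_ :: _) => 0

/-- The number of old leaves: leaves that are the leftmost child of their parent. -/
def oldLeaves : PlaneTree → ℕ
  | node [] => 0
  | node (t :: ts) =>
      isLeafInd t + oldLeaves t + (ts.attach.map (fun s => oldLeaves s.1)).sum
decreasing_by
  · simp; omega
  · have := List.sizeOf_lt_of_mem s.2; simp at *; omega

/-- The number of young leaves: leaves that are not the leftmost child of their parent. -/
def youngLeaves : PlaneTree → ℕ
  | node [] => 0
  | node (t :: ts) =>
      youngLeaves t + (ts.attach.map (fun s => isLeafInd s.1 + youngLeaves s.1)).sum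
decreasing_by
  · simp; omega
  · have := List.sizeOf_lt_of_mem s.2; simp at *; omega

end PlaneTree

namespace PlaneTree

lemma sum_attach_map {α : Type*} (ts : List α) (f : α → ℕ) :
    (ts.attach.map (fun t => f t.1)).sum = (ts.map f).sum := by
  rw [show (fun t : {x // x ∈ ts} => f t.1) = f ∘ Subtype.val from rfl, ← List.map_map,
    List.attach_map_subtype_val]

lemma edges_node (ts : List PlaneTree) :
    edges (node ts) = (ts.map (fun t => edges t + 1)).sum := by
  rw [edges]; exact sum_attach_map ts (fun t => t.edges + 1)

lemma oldLeaves_cons (t : PlaneTree) (ts : List PlaneTree) :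
    oldLeaves (node (t :: ts)) = isLeafInd t + oldLeaves t + (ts.map oldLeaves).sum := by
  rw [oldLeaves]; congr 1; exact sum_attach_map ts oldLeaves

lemma youngLeaves_cons (t : PlaneTree) (ts : List PlaneTree) :
    youngLeaves (node (t :: ts)) =
      youngLeaves t + (ts.map (fun s => isLeafInd s + youngLeaves s)).sum := by
  rw [youngLeaves]; congr 1; exact sum_attach_map ts (fun s => s.isLeafInd + s.youngLeaves)


end PlaneTree

inductive BM where
  | nil : BM
  | b1 : BM → BM
  | b2 : BM → BM
  | br : BM → BM → BM

namespace BM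

def len : BM → ℕ
  | nil => 0
  | b1 w => len w + 1
  | b2 w => len w + 1
  | br a b => len a + len b + 2

def ups : BM → ℕ
  | nil => 0
  | b1 w => ups w
  | b2 w => ups w
  | br a b => ups a + ups b + 1

def f2s : BM → ℕ
  | nil => 0
  | b1 w => f2s w
  | b2 w => f2s w + 1
  | br a b => f2s a + f2s b

end BM

open PlaneTree in
def toBM : PlaneTree → BM
  | .node [] => .nil
  | .node [.node []] => .nil
  | .node [.node (c :: cs)] => .b1 (toBM (.node (c :: cs)))
  | .node (t :: .node [] :: ts) => .b2 (toBM (.node (t :: ts)))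
  | .node (t :: .node (c :: cs) :: ts) =>
      .br (toBM (.node (c :: cs))) (toBM (.node (t :: ts)))
decreasing_by all_goals simp <;> omega

open PlaneTree in
def ofBM : BM → PlaneTree
  | .nil => .node [.node []]
  | .b1 w => .node [ofBM w]
  | .b2 w =>
      match ofBM w with
      | .node [] => .node []
      | .node (t :: ts) => .node (t :: .node [] :: ts)
  | .br a b =>
      match ofBM b with
      | .node [] => .node []
      | .node (t :: ts) => .node (t :: ofBM a :: ts)

open PlaneTree

lemma ofBM_shape (w : BM) : ∃ t ts, ofBM w = .node (t :: ts) := by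
  induction w with
  | nil => exact ⟨_, _, rfl⟩
  | b1 w ih => exact ⟨_, _, rfl⟩
  | b2 w ih => obtain ⟨t, ts, h⟩ := ih; exact ⟨t, .node [] :: ts, by simp [ofBM, h]⟩
  | br a b iha ihb => obtain ⟨t, ts, h⟩ := ihb; exact ⟨t, ofBM a :: ts, by simp [ofBM, h]⟩

lemma edges_ofBM (w : BM) : (ofBM w).edges = w.len + 1 := by
  induction w with
  | nil => simp [ofBM, edges_node, BM.len]
  | b1 w ih => simp [ofBM, edges_node, BM.len]; omega
  | b2 w ih =>
      obtain ⟨t, ts, h⟩ := ofBM_shape w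
      rw [h] at ih
      simp [ofBM, h, edges_node, BM.len] at *; omega
  | br a b iha ihb =>
      obtain ⟨t, ts, h⟩ := ofBM_shape b
      rw [h] at ihb
      simp [ofBM, h, edges_node, BM.len] at *; omega

lemma oldLeaves_ofBM (w : BM) : (ofBM w).oldLeaves = w.ups + 1 := by
  induction w with
  | nil => simp [ofBM, oldLeaves_cons, isLeafInd, oldLeaves, BM.ups]
  | b1 w ih =>
      obtain ⟨t, ts, h⟩ := ofBM_shape w
      rw [h] at ih
      simp [ofBM, h, oldLeaves_cons, isLeafInd, BM.ups] at *; omega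
  | b2 w ih =>
      obtain ⟨t, ts, h⟩ := ofBM_shape w
      rw [h] at ih
      simp [ofBM, h, oldLeaves_cons, isLeafInd, oldLeaves, BM.ups] at *; omega
  | br a b iha ihb =>
      obtain ⟨t, ts, h⟩ := ofBM_shape b
      obtain ⟨c, cs, ha⟩ := ofBM_shape a
      rw [h] at ihb
      simp [ofBM, h, ha, oldLeaves_cons, isLeafInd, BM.ups] at *; omega

lemma youngLeaves_ofBM (w : BM) : (ofBM w).youngLeaves = w.f2s := by
  induction w with
  | nil => simp [ofBM, youngLeaves_cons, youngLeaves, BM.f2s]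
  | b1 w ih =>
      obtain ⟨t, ts, h⟩ := ofBM_shape w
      rw [h] at ih
      simp [ofBM, h, youngLeaves_cons, BM.f2s] at *; omega
  | b2 w ih =>
      obtain ⟨t, ts, h⟩ := ofBM_shape w
      rw [h] at ih
      simp [ofBM, h, youngLeaves_cons, isLeafInd, youngLeaves, BM.f2s] at *; omega
  | br a b iha ihb =>
      obtain ⟨t, ts, h⟩ := ofBM_shape b
      obtain ⟨c, cs, ha⟩ := ofBM_shape a
      rw [h] at ihb
      simp [ofBM, h, ha, youngLeaves_cons, isLeafInd, BM.f2s] at *; omega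

lemma toBM_ofBM (w : BM) : toBM (ofBM w) = w := by
  induction w with
  | nil => simp [ofBM, toBM]
  | b1 w ih =>
      obtain ⟨t, ts, h⟩ := ofBM_shape w
      rw [h] at ih
      simp [ofBM, h, toBM, ih]
  | b2 w ih =>
      obtain ⟨t, ts, h⟩ := ofBM_shape w
      rw [h] at ih
      simp [ofBM, h, toBM, ih]
  | br a b iha ihb =>
      obtain ⟨t, ts, h⟩ := ofBM_shape b
      obtain ⟨c, cs, ha⟩ := ofBM_shape a
      rw [h] at ihb
      rw [ha] at iha
      simp [ofBM, h, ha, toBM, iha, ihb]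

lemma ofBM_toBM : ∀ T : PlaneTree, T ≠ .node [] → ofBM (toBM T) = T := by
  intro T
  induction T using toBM.induct with
  | case1 => intro h; exact absurd rfl h
  | case2 => intro _; simp [toBM, ofBM]
  | case3 c cs ih =>
      intro _
      rw [toBM, ofBM, ih (by simp)]
  | case4 t ts ih =>
      intro _
      rw [toBM, ofBM]
      rw [ih (by simp)]
  | case5 t c cs ts ih1 ih2 =>
      intro _
      rw [toBM, ofBM]
      rw [ih2 (by simp), ih1 (by simp)]

lemma edges_nil : (PlaneTree.node []).edges = 0 := by simp [edges_node]

def treeEquivBM (n i j : ℕ) :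
    {T : PlaneTree // T.edges = n + 1 ∧ T.oldLeaves = i + 1 ∧ T.youngLeaves = j} ≃
    {w : BM // w.len = n ∧ w.ups = i ∧ w.f2s = j} where
  toFun := fun ⟨T, hT⟩ => ⟨toBM T, by
    have hne : T ≠ .node [] := by rintro rfl; rw [edges_nil] at hT; omega
    have h := ofBM_toBM T hne
    have e1 := edges_ofBM (toBM T)
    have e2 := oldLeaves_ofBM (toBM T)
    have e3 := youngLeaves_ofBM (toBM T)
    rw [h] at e1 e2 e3; omega⟩
  invFun := fun ⟨w, hw⟩ => ⟨ofBM w, by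
    rw [edges_ofBM, oldLeaves_ofBM, youngLeaves_ofBM]; omega⟩
  left_inv := fun ⟨T, hT⟩ => Subtype.ext
    (ofBM_toBM T (by rintro rfl; rw [edges_nil] at hT; omega))
  right_inv := fun ⟨w, hw⟩ => Subtype.ext (toBM_ofBM w)

inductive St where
  | U : St
  | D : St
  | F1 : St
  | F2 : St
  deriving DecidableEq

def BM.toWord : BM → List St
  | .nil => []
  | .b1 w => St.F1 :: w.toWord
  | .b2 w => St.F2 :: w.toWord
  | .br a b => St.U :: (a.toWord ++ St.D :: b.toWord)

lemma toWord_length (w : BM) : w.toWord.length = w.len := by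
  induction w <;> simp [BM.toWord, BM.len, *] <;> omega

lemma toWord_count_U (w : BM) : w.toWord.count St.U = w.ups := by
  induction w <;> simp [BM.toWord, BM.ups, List.count_cons, *]

lemma toWord_count_D (w : BM) : w.toWord.count St.D = w.ups := by
  induction w <;> simp [BM.toWord, BM.ups, List.count_cons, *] <;> omega

lemma toWord_count_F2 (w : BM) : w.toWord.count St.F2 = w.f2s := by
  induction w <;> simp [BM.toWord, BM.f2s, List.count_cons, *]

lemma toWord_prefix (w : BM) :
    ∀ m, ((BM.toWord w).take m).count St.D ≤ ((BM.toWord w).take m).count St.U := by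
  induction w with
  | nil => simp [BM.toWord]
  | b1 w ih =>
      intro m
      cases m with
      | zero => simp
      | succ m => simpa [BM.toWord, List.count_cons] using ih m
  | b2 w ih =>
      intro m
      cases m with
      | zero => simp
      | succ m => simpa [BM.toWord, List.count_cons] using ih m
  | br a b iha ihb =>
      intro m
      cases m with
      | zero => simp
      | succ m =>
          simp only [BM.toWord, List.take_succ_cons, List.count_cons,
            List.take_append, List.count_append]
          by_cases hm : m ≤ a.toWord.length
          · have h0 : m - a.toWord.length = 0 := by omega
            have := iha m
            simp [h0]; omega
          · have h1 : ∃ s, m - a.toWord.length = s + 1 := ⟨m - a.toWord.length - 1, by omega⟩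
            obtain ⟨s, hs⟩ := h1
            have hA : a.toWord.take m = a.toWord := List.take_of_length_le (by omega)
            rw [hs, hA, List.take_succ_cons]
            have := ihb s
            simp [List.count_cons, toWord_count_U, toWord_count_D]; omega

def parseF : ℕ → List St → Option (BM × List St)
  | 0, _ => none
  | _ + 1, [] => some (.nil, [])
  | _ + 1, St.D :: t => some (.nil, St.D :: t)
  | n + 1, St.F1 :: t => (parseF n t).map (fun p => (.b1 p.1, p.2))
  | n + 1, St.F2 :: t => (parseF n t).map (fun p => (.b2 p.1, p.2))
  | n + 1, St.U :: t =>
      match parseF n t with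
      | some (a, St.D :: t2) =>
          match parseF n t2 with
          | some (b, r2) => some (.br a b, r2)
          | none => none
      | _ => none

lemma parse_toWord : ∀ (w : BM) (r fuel), (BM.toWord w ++ r).length < fuel →
    (r = [] ∨ ∃ t, r = St.D :: t) → parseF fuel (BM.toWord w ++ r) = some (w, r) := by
  intro w
  induction w with
  | nil =>
      intro r fuel hf hr
      obtain ⟨f, rfl⟩ : ∃ f, fuel = f + 1 := ⟨fuel - 1, by omega⟩
      rcases hr with rfl | ⟨t, rfl⟩ <;> simp [BM.toWord, parseF]
  | b1 w ih =>
      intro r fuel hf hr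
      obtain ⟨f, rfl⟩ : ∃ f, fuel = f + 1 := ⟨fuel - 1, by omega⟩
      simp only [BM.toWord, List.cons_append, parseF, List.append_eq]
      rw [ih r f (by simp [BM.toWord] at hf ⊢; omega) hr]
      rfl
  | b2 w ih =>
      intro r fuel hf hr
      obtain ⟨f, rfl⟩ : ∃ f, fuel = f + 1 := ⟨fuel - 1, by omega⟩
      simp only [BM.toWord, List.cons_append, parseF, List.append_eq]
      rw [ih r f (by simp [BM.toWord] at hf ⊢; omega) hr]
      rfl
  | br a b iha ihb =>
      intro r fuel hf hr
      obtain ⟨f, rfl⟩ : ∃ f, fuel = f + 1 := ⟨fuel - 1, by omega⟩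
      have hassoc : BM.toWord (a.br b) ++ r
          = St.U :: (a.toWord ++ (St.D :: (b.toWord ++ r))) := by
        simp [BM.toWord]
      rw [hassoc]
      simp only [parseF]
      rw [iha (St.D :: (b.toWord ++ r)) f (by simp [BM.toWord] at hf ⊢; omega) (Or.inr ⟨_, rfl⟩)]
      simp only []
      rw [ihb r f (by simp [BM.toWord] at hf ⊢; omega) hr]

lemma parse_sound : ∀ fuel (l : List St), l.length < fuel →
    (parseF fuel l = none → l.count St.D < l.count St.U) ∧
    (∀ w r, parseF fuel l = some (w, r) →
      l = BM.toWord w ++ r ∧ (r = [] ∨ ∃ t, r = St.D :: t)) := by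
  intro fuel
  induction fuel with
  | zero => intro l hl; omega
  | succ f ih =>
      intro l hl
      match l with
      | [] =>
          refine ⟨by simp [parseF], fun w r h => ?_⟩
          simp [parseF] at h
          obtain ⟨rfl, rfl⟩ := h
          exact ⟨rfl, Or.inl rfl⟩
      | St.D :: t =>
          refine ⟨by simp [parseF], fun w r h => ?_⟩
          simp [parseF] at h
          obtain ⟨rfl, rfl⟩ := h
          exact ⟨rfl, Or.inr ⟨t, rfl⟩⟩
      | St.F1 :: t =>
          simp only [parseF, List.length_cons] at hl ⊢
          have iht := ih t (by omega)
          constructor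
          · intro h
            rcases hpt : parseF f t with _ | ⟨a, r⟩
            · have := iht.1 hpt
              simp [List.count_cons]; omega
            · rw [hpt] at h; simp at h
          · intro w r h
            rcases hpt : parseF f t with _ | ⟨a, r'⟩
            · rw [hpt] at h; simp at h
            · rw [hpt] at h
              simp at h
              obtain ⟨rfl, rfl⟩ := h
              obtain ⟨hdec, hr⟩ := iht.2 a r' hpt
              exact ⟨by rw [hdec]; simp [BM.toWord], hr⟩
      | St.F2 :: t =>
          simp only [parseF, List.length_cons] at hl ⊢
          have iht := ih t (by omega)
          constructor
          · intro h
            rcases hpt : parseF f t with _ | ⟨a, r⟩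
            · have := iht.1 hpt
              simp [List.count_cons]; omega
            · rw [hpt] at h; simp at h
          · intro w r h
            rcases hpt : parseF f t with _ | ⟨a, r'⟩
            · rw [hpt] at h; simp at h
            · rw [hpt] at h
              simp at h
              obtain ⟨rfl, rfl⟩ := h
              obtain ⟨hdec, hr⟩ := iht.2 a r' hpt
              exact ⟨by rw [hdec]; simp [BM.toWord], hr⟩
      | St.U :: t =>
          simp only [parseF, List.length_cons] at hl ⊢
          have iht := ih t (by omega)
          rcases hpt : parseF f t with _ | ⟨a, r'⟩
          · refine ⟨fun _ => ?_, fun w r h => ?_⟩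
            · have := iht.1 hpt
              simp [List.count_cons]; omega
            · simp at h
          · obtain ⟨hdec, hr⟩ := iht.2 a r' hpt
            rcases hr with rfl | ⟨t2, rfl⟩
            · refine ⟨fun _ => ?_, fun w r h => ?_⟩
              · rw [List.append_nil] at hdec
                subst hdec
                simp [List.count_cons, toWord_count_U, toWord_count_D]
              · simp at h
            · have ht2 : t2.length < f := by
                rw [hdec] at hl; simp at hl; omega
              have iht2 := ih t2 ht2
              rcases hpt2 : parseF f t2 with _ | ⟨b, r2⟩
              · refine ⟨fun _ => ?_, fun w r h => ?_⟩
                · have := iht2.1 hpt2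
                  rw [hdec]
                  simp [List.count_cons, toWord_count_U, toWord_count_D]
                  omega
                · simp [hpt2] at h
              · obtain ⟨hdec2, hr2⟩ := iht2.2 b r2 hpt2
                refine ⟨fun h => ?_, fun w r h => ?_⟩
                · simp [hpt2] at h
                · simp [hpt2] at h
                  obtain ⟨rfl, rfl⟩ := h
                  refine ⟨?_, hr2⟩
                  rw [hdec, hdec2]
                  simp [BM.toWord]

def Bal (l : List St) : Prop :=
  l.count St.U = l.count St.D ∧ ∀ m, (l.take m).count St.D ≤ (l.take m).count St.U

lemma bal_toWord (w : BM) : Bal w.toWord :=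
  ⟨by rw [toWord_count_U, toWord_count_D], toWord_prefix w⟩

lemma toWord_inj {w w' : BM} (h : BM.toWord w = BM.toWord w') : w = w' := by
  have h1 := parse_toWord w [] ((BM.toWord w').length + 1) (by simp [h]) (Or.inl rfl)
  have h2 := parse_toWord w' [] ((BM.toWord w').length + 1) (by simp) (Or.inl rfl)
  rw [List.append_nil] at h1 h2
  rw [h, h2] at h1
  simpa using h1.symm

lemma exists_toWord (l : List St) (hb : Bal l) : ∃ w, BM.toWord w = l := by
  rcases h : parseF (l.length + 1) l with _ | ⟨w, r⟩
  · have := (parse_sound (l.length + 1) l (by omega)).1 h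
    exact absurd hb.1 (by omega)
  · obtain ⟨hdec, hr⟩ := (parse_sound (l.length + 1) l (by omega)).2 w r h
    rcases hr with rfl | ⟨t, rfl⟩
    · exact ⟨w, by rw [hdec, List.append_nil]⟩
    · exfalso
      have hpre := hb.2 (w.toWord.length + 1)
      rw [hdec, List.take_append,
        List.take_of_length_le (by omega),
        show w.toWord.length + 1 - w.toWord.length = 1 from by omega,
        List.take_succ_cons, List.take_zero] at hpre
      simp [List.count_append, toWord_count_U, toWord_count_D] at hpre

noncomputable def bmEquivWord (L k j : ℕ) :
    {w : BM // w.len = L ∧ w.ups = k ∧ w.f2s = j} ≃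
    {l : List St // l.length = L ∧ Bal l ∧ l.count St.U = k ∧ l.count St.F2 = j} where
  toFun := fun ⟨w, hw⟩ => ⟨w.toWord, by
    rw [toWord_length, toWord_count_U, toWord_count_F2]
    exact ⟨hw.1, bal_toWord w, hw.2.1, hw.2.2⟩⟩
  invFun := fun ⟨l, hl⟩ => ⟨(exists_toWord l hl.2.1).choose, by
    have hspec := (exists_toWord l hl.2.1).choose_spec
    refine ⟨?_, ?_, ?_⟩
    · rw [← toWord_length, hspec]; exact hl.1
    · rw [← toWord_count_U, hspec]; exact hl.2.2.1
    · rw [← toWord_count_F2, hspec]; exact hl.2.2.2⟩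
  left_inv := fun ⟨w, hw⟩ => Subtype.ext (by
    apply toWord_inj
    exact (exists_toWord w.toWord (bal_toWord w)).choose_spec)
  right_inv := fun ⟨l, hl⟩ => Subtype.ext (exists_toWord l hl.2.1).choose_spec

def stIsUD : St → Bool
  | .U => true
  | .D => true
  | _ => false

def stToUD : St → Option DyckStep
  | .U => some .U
  | .D => some .D
  | _ => none

def stToFlat : St → Option Bool
  | .F1 => some false
  | .F2 => some true
  | _ => none

def wMask (l : List St) : List Bool := l.map stIsUD
def wUds (l : List St) : List DyckStep := l.filterMap stToUD
def wFlats (l : List St) : List Bool := l.filterMap stToFlat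

def merge : List Bool → List DyckStep → List Bool → List St
  | [], _, _ => []
  | true :: m, u :: us, fl =>
      (match u with | .U => St.U | .D => St.D) :: merge m us fl
  | true :: _, [], _ => []
  | false :: m, us, b :: fl => (if b then St.F2 else St.F1) :: merge m us fl
  | false :: _, _, [] => []

lemma merge_split (l : List St) : merge (wMask l) (wUds l) (wFlats l) = l := by
  induction l with
  | nil => rfl
  | cons x t ih => cases x <;> simp [wMask, wUds, wFlats, stIsUD, stToUD, stToFlat, merge] at ih ⊢ <;> exact ih

lemma split_merge : ∀ (m : List Bool) (us : List DyckStep) (fl : List Bool),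
    us.length = m.count true → fl.length = m.count false →
    wMask (merge m us fl) = m ∧ wUds (merge m us fl) = us ∧ wFlats (merge m us fl) = fl := by
  intro m
  induction m with
  | nil =>
      intro us fl h1 h2
      simp at h1 h2
      subst h1; subst h2
      simp [merge, wMask, wUds, wFlats]
  | cons b t ih =>
      intro us fl h1 h2
      cases b with
      | true =>
          match us with
          | [] => simp [List.count_cons] at h1
          | u :: us' =>
              simp [List.count_cons] at h1 h2
              obtain ⟨hm, hu, hf⟩ := ih us' fl (by omega) (by simpa using h2)
              cases u <;>
                simp only [merge, wMask, wUds, wFlats, stIsUD, stToUD, stToFlat,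
                  List.map_cons, List.filterMap_cons] at hm hu hf ⊢ <;>
                simp [hm, hu, hf]
      | false =>
          match fl with
          | [] => simp [List.count_cons] at h2
          | b' :: fl' =>
              simp [List.count_cons] at h1 h2
              obtain ⟨hm, hu, hf⟩ := ih us fl' (by simpa using h1) (by omega)
              cases b' <;>
                simp only [merge, wMask, wUds, wFlats, stIsUD, stToUD, stToFlat,
                  List.map_cons, List.filterMap_cons] at hm hu hf ⊢ <;>
                simp [hm, hu, hf]

lemma count_uds_U (l : List St) : (wUds l).count DyckStep.U = l.count St.U := by
  induction l with
  | nil => rfl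
  | cons x t ih => cases x <;> simp [wUds, stToUD.eq_def, List.count_cons] at ih ⊢ <;> omega

lemma count_uds_D (l : List St) : (wUds l).count DyckStep.D = l.count St.D := by
  induction l with
  | nil => rfl
  | cons x t ih => cases x <;> simp [wUds, stToUD.eq_def, List.count_cons] at ih ⊢ <;> omega

lemma count_flats_true (l : List St) : (wFlats l).count true = l.count St.F2 := by
  induction l with
  | nil => rfl
  | cons x t ih => cases x <;> simp [wFlats, stToFlat.eq_def, List.count_cons] at ih ⊢ <;> omega

lemma count_mask_true (l : List St) : (wMask l).count true = l.count St.U + l.count St.D := by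
  induction l with
  | nil => rfl
  | cons x t ih => cases x <;> simp [wMask, stIsUD, List.count_cons] at ih ⊢ <;> omega

lemma length_uds (l : List St) : (wUds l).length = l.count St.U + l.count St.D := by
  induction l with
  | nil => rfl
  | cons x t ih => cases x <;> simp [wUds, stToUD.eq_def, List.count_cons] at ih ⊢ <;> omega

lemma length_split (l : List St) : l.length = (wUds l).length + (wFlats l).length := by
  induction l with
  | nil => rfl
  | cons x t ih => cases x <;> simp [wUds, wFlats, stToUD.eq_def, stToFlat.eq_def] at ih ⊢ <;> omega

lemma count_bool (m : List Bool) : m.count true + m.count false = m.length := by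
  induction m with
  | nil => rfl
  | cons b t ih => cases b <;> simp [List.count_cons, *] <;> omega

lemma uds_take_exists (l : List St) :
    ∀ m, ∃ m', ((wUds l).take m').count DyckStep.U = (l.take m).count St.U ∧
      ((wUds l).take m').count DyckStep.D = (l.take m).count St.D := by
  induction l with
  | nil => intro m; exact ⟨0, by simp⟩
  | cons x t ih =>
      intro m
      cases m with
      | zero => exact ⟨0, by simp⟩
      | succ m =>
          obtain ⟨m', h1, h2⟩ := ih m
          cases x with
          | U => exact ⟨m' + 1, by
              simp only [wUds, stToUD, List.filterMap_cons, List.take_succ_cons, List.count_cons] at h1 h2 ⊢; simp [h1, h2]⟩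
          | D => exact ⟨m' + 1, by
              simp only [wUds, stToUD, List.filterMap_cons, List.take_succ_cons, List.count_cons] at h1 h2 ⊢; simp [h1, h2]⟩
          | F1 => exact ⟨m', by
              simp only [wUds, stToUD, List.filterMap_cons, List.take_succ_cons, List.count_cons] at h1 h2 ⊢; simp [h1, h2]⟩
          | F2 => exact ⟨m', by
              simp only [wUds, stToUD, List.filterMap_cons, List.take_succ_cons, List.count_cons] at h1 h2 ⊢; simp [h1, h2]⟩

lemma take_uds_exists (l : List St) :
    ∀ m', ∃ m, (l.take m).count St.U = ((wUds l).take m').count DyckStep.U ∧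
      (l.take m).count St.D = ((wUds l).take m').count DyckStep.D := by
  induction l with
  | nil => intro m'; exact ⟨0, by simp [wUds]⟩
  | cons x t ih =>
      intro m'
      cases x with
      | U =>
          cases m' with
          | zero => exact ⟨0, by simp⟩
          | succ m' =>
              obtain ⟨m, h1, h2⟩ := ih m'
              exact ⟨m + 1, by
                simp only [wUds, stToUD, List.filterMap_cons, List.take_succ_cons, List.count_cons] at h1 h2 ⊢; simp [h1, h2]⟩
      | D =>
          cases m' with
          | zero => exact ⟨0, by simp⟩
          | succ m' =>
              obtain ⟨m, h1, h2⟩ := ih m'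
              exact ⟨m + 1, by
                simp only [wUds, stToUD, List.filterMap_cons, List.take_succ_cons, List.count_cons] at h1 h2 ⊢; simp [h1, h2]⟩
      | F1 =>
          obtain ⟨m, h1, h2⟩ := ih m'
          exact ⟨m + 1, by
            simp only [wUds, stToUD, List.filterMap_cons, List.take_succ_cons, List.count_cons] at h1 h2 ⊢; simp [h1, h2]⟩
      | F2 =>
          obtain ⟨m, h1, h2⟩ := ih m'
          exact ⟨m + 1, by
            simp only [wUds, stToUD, List.filterMap_cons, List.take_succ_cons, List.count_cons] at h1 h2 ⊢; simp [h1, h2]⟩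

lemma bal_iff (l : List St) :
    Bal l ↔ ((wUds l).count DyckStep.U = (wUds l).count DyckStep.D ∧
      ∀ m', ((wUds l).take m').count DyckStep.D ≤ ((wUds l).take m').count DyckStep.U) := by
  constructor
  · intro ⟨h1, h2⟩
    refine ⟨by rw [count_uds_U, count_uds_D, h1], fun m' => ?_⟩
    obtain ⟨m, hm1, hm2⟩ := take_uds_exists l m'
    rw [← hm1, ← hm2]
    exact h2 m
  · intro ⟨h1, h2⟩
    refine ⟨by rw [← count_uds_U, ← count_uds_D, h1], fun m => ?_⟩
    obtain ⟨m', hm1, hm2⟩ := uds_take_exists l m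
    rw [← hm1, ← hm2]
    exact h2 m'

def wordEquivTriple (L k j : ℕ) :
    {l : List St // l.length = L ∧ Bal l ∧ l.count St.U = k ∧ l.count St.F2 = j} ≃
    ({m : List Bool // m.length = L ∧ m.count true = 2 * k} ×
     {d : DyckWord // d.semilength = k} ×
     {fl : List Bool // fl.length = L - 2 * k ∧ fl.count true = j}) where
  toFun := fun l =>
    (⟨wMask l.1, by
        simp [wMask, l.2.1]
      , by
        have hD : l.1.count St.D = k := l.2.2.1.1 ▸ l.2.2.2.1
        rw [count_mask_true, l.2.2.2.1, hD]; ring⟩,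
     ⟨⟨wUds l.1, ((bal_iff l.1).mp l.2.2.1).1, fun i => ((bal_iff l.1).mp l.2.2.1).2 i⟩, by
        show (wUds l.1).count DyckStep.U = k
        rw [count_uds_U]; exact l.2.2.2.1⟩,
     ⟨wFlats l.1, by
        have hD : l.1.count St.D = k := l.2.2.1.1 ▸ l.2.2.2.1
        have h1 := length_split l.1
        rw [length_uds, l.2.2.2.1, hD] at h1
        have h2 := l.2.1
        constructor
        · omega
        · rw [count_flats_true]; exact l.2.2.2.2⟩)
  invFun := fun x =>
    ⟨merge x.1.1 x.2.1.1.toList x.2.2.1, by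
      obtain ⟨⟨m, hmL, hmc⟩, ⟨d, hd⟩, ⟨fl, hflL, hflc⟩⟩ := x
      simp only []
      have hdl : d.toList.length = m.count true := by
        have := d.two_mul_semilength_eq_length
        rw [hmc]
        have : d.semilength = k := hd
        omega
      have hfl : fl.length = m.count false := by
        have h1 := count_bool m
        have h2 : m.count true ≤ m.length := List.count_le_length
        omega
      obtain ⟨hM, hU', hF'⟩ := split_merge m d.toList fl hdl hfl
      have hlen : (merge m d.toList fl).length = L := by
        have := congrArg List.length hM
        simp [wMask] at this
        omega
      refine ⟨hlen, ?_, ?_, ?_⟩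
      · rw [bal_iff, hU']
        exact ⟨d.count_U_eq_count_D, d.count_D_le_count_U⟩
      · rw [← count_uds_U, hU']
        exact hd
      · rw [← count_flats_true, hF']
        exact hflc⟩
  left_inv := fun l => Subtype.ext (merge_split l.1)
  right_inv := fun x => by
    obtain ⟨⟨m, hmL, hmc⟩, ⟨d, hd⟩, ⟨fl, hflL, hflc⟩⟩ := x
    have hdl : d.toList.length = m.count true := by
      have := d.two_mul_semilength_eq_length
      rw [hmc]
      have : d.semilength = k := hd
      omega
    have hfl : fl.length = m.count false := by
      have h1 := count_bool m
      have h2 : m.count true ≤ m.length := List.count_le_length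
      omega
    obtain ⟨hM, hU', hF'⟩ := split_merge m d.toList fl hdl hfl
    refine Prod.ext ?_ (Prod.ext ?_ ?_) <;> simp only []
    · exact Subtype.ext hM
    · exact Subtype.ext (DyckWord.ext hU')
    · exact Subtype.ext hF'

lemma vget_mk_toList {α : Type*} {n : ℕ} (v : List.Vector α n) (h : v.toList.length = n) :
    List.Vector.get ⟨v.toList, h⟩ = v.get := rfl

def boolListEquivFinset (L s : ℕ) :
    {m : List Bool // m.length = L ∧ m.count true = s} ≃
    {S : Finset (Fin L) // S.card = s} where
  toFun := fun m =>
    ⟨Finset.univ.filter (fun i : Fin L =>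
        List.Vector.get ⟨m.1, m.2.1⟩ i = true),
      by rw [Fin.card_filter_univ_eq_vector_get_eq_count true (⟨m.1, m.2.1⟩ : List.Vector Bool L)]; exact m.2.2⟩
  invFun := fun S =>
    ⟨(List.Vector.ofFn (fun i : Fin L => decide (i ∈ S.1))).toList, by
      constructor
      · simp
      · rw [show (List.Vector.ofFn (fun i : Fin L => decide (i ∈ S.1))).toList.count true
            = (List.Vector.ofFn (fun i : Fin L => decide (i ∈ S.1))).toList.count true from rfl]
        have hv : ((List.Vector.ofFn (fun i : Fin L => decide (i ∈ S.1))).toList.count true)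
            = (Finset.univ.filter (fun i : Fin L =>
                List.Vector.get (List.Vector.ofFn (fun i : Fin L => decide (i ∈ S.1))) i
                  = true)).card :=
          (Fin.card_filter_univ_eq_vector_get_eq_count true _).symm
        rw [hv]
        have hfe : Finset.univ.filter (fun i : Fin L =>
            List.Vector.get (List.Vector.ofFn (fun i : Fin L => decide (i ∈ S.1))) i = true)
            = S.1 := by
          ext i
          simp [List.Vector.get_ofFn]
        rw [hfe]
        exact S.2⟩
  left_inv := fun m => by
    apply Subtype.ext
    show (List.Vector.ofFn (fun i : Fin L => decide (i ∈ _))).toList = m.1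
    have hfun : (fun i : Fin L => decide (i ∈ Finset.univ.filter (fun i : Fin L =>
        List.Vector.get ⟨m.1, m.2.1⟩ i = true)))
        = List.Vector.get ⟨m.1, m.2.1⟩ := by
      funext i
      simp
    rw [hfun, List.Vector.ofFn_get (⟨m.1, m.2.1⟩ : List.Vector Bool L)]
    rfl
  right_inv := fun S => by
    apply Subtype.ext
    show Finset.univ.filter _ = S.1
    ext i
    simp only [vget_mk_toList]
    simp [List.Vector.get_ofFn]

lemma card_boolList (L s : ℕ) :
    Nat.card {m : List Bool // m.length = L ∧ m.count true = s} = L.choose s := by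
  rw [Nat.card_congr (boolListEquivFinset L s), Nat.card_eq_fintype_card,
    Fintype.card_finset_len, Fintype.card_fin]

lemma card_dyck (k : ℕ) : Nat.card {d : DyckWord // d.semilength = k} = catalan k := by
  rw [Nat.card_eq_fintype_card, DyckWord.card_dyckWord_semilength_eq_catalan]

lemma final_card (n' i' j : ℕ) :
    Nat.card {T : PlaneTree // T.edges = n' + 1 ∧ T.oldLeaves = i' + 1 ∧ T.youngLeaves = j}
      = n'.choose (2 * i') * (catalan i' * (n' - 2 * i').choose j) := by
  rw [Nat.card_congr ((treeEquivBM n' i' j).trans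
    ((bmEquivWord n' i' j).trans (wordEquivTriple n' i' j)))]
  rw [Nat.card_prod, Nat.card_prod, card_boolList, card_dyck, card_boolList]

open Nat in
lemma key_arith (a j c : ℕ) :
    ((2*a+j+c+1 : ℕ) : ℚ) * ((2*a+j+c).choose (2*a)) * ((2*a).choose a) * ((j+c).choose j)
      = ((a : ℚ) + 1) * ((2*a+j+c+1).choose (a+1)) * ((a+j+c).choose j) * ((a+c).choose a) := by
  have hfac : ∀ m : ℕ, ((m ! : ℕ) : ℚ) ≠ 0 := fun m => Nat.cast_ne_zero.2 (Nat.factorial_ne_zero m)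
  rw [Nat.cast_choose ℚ (show 2*a ≤ 2*a+j+c by omega),
    show 2*a+j+c - 2*a = j + c from by omega,
    Nat.cast_choose ℚ (show a ≤ 2*a by omega),
    show 2*a - a = a from by omega,
    Nat.cast_choose ℚ (show j ≤ j+c by omega),
    show j+c - j = c from by omega,
    Nat.cast_choose ℚ (show a+1 ≤ 2*a+j+c+1 by omega),
    show 2*a+j+c+1 - (a+1) = a+j+c from by omega,
    Nat.cast_choose ℚ (show j ≤ a+j+c by omega),
    show a+j+c - j = a + c from by omega,
    Nat.cast_choose ℚ (show a ≤ a+c by omega),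
    show a+c - a = c from by omega,
    show (2*a+j+c+1)! = (2*a+j+c+1) * (2*a+j+c)! from Nat.factorial_succ _,
    show (a+1)! = (a+1) * a ! from Nat.factorial_succ _]
  push_cast
  field_simp

lemma cat_cast (a : ℕ) : (catalan a : ℚ) = ((2*a).choose a : ℕ) / ((a : ℚ) + 1) := by
  have h1 := congrArg (Nat.cast : ℕ → ℚ) (succ_mul_catalan_eq_centralBinom a)
  rw [Nat.centralBinom] at h1
  push_cast at h1
  have ha : ((a : ℚ) + 1) ≠ 0 := by positivity
  field_simp
  linarith [h1]

/-- The number of plane trees with `n` edges, `i` old leaves, and `j` young leaves is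
`(1/n)·C(n,i)·C(n-i,j)·C(n-i-j,i-1)`. -/
theorem card_planeTrees_old_young (n i j : ℕ) (hn : 1 ≤ n) (hi : 1 ≤ i) :
    (Nat.card {T : PlaneTree // T.edges = n ∧ T.oldLeaves = i ∧ T.youngLeaves = j} : ℚ) =
      (1 / n) * n.choose i * (n - i).choose j * (n - i - j).choose (i - 1) := by
  obtain ⟨n', rfl⟩ : ∃ n', n = n' + 1 := ⟨n - 1, by omega⟩
  obtain ⟨i', rfl⟩ : ∃ i', i = i' + 1 := ⟨i - 1, by omega⟩
  rw [final_card]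
  rw [show n' + 1 - (i' + 1) = n' - i' from by omega,
    show i' + 1 - 1 = i' from by omega]
  by_cases h : 2 * i' + j ≤ n'
  · obtain ⟨c, rfl⟩ : ∃ c, n' = 2 * i' + j + c := ⟨n' - 2 * i' - j, by omega⟩
    rw [show 2*i'+j+c - 2*i' = j + c from by omega,
      show 2*i'+j+c - i' = i' + j + c from by omega,
      show i' + j + c - j = i' + c from by omega]
    have key := key_arith i' j c
    push_cast
    rw [cat_cast]
    push_cast
    have hN : ((2*i'+j+c+1 : ℕ) : ℚ) ≠ 0 := by positivity
    have ha : ((i' : ℚ) + 1) ≠ 0 := by positivity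
    push_cast at hN key
    field_simp
    linear_combination key
  · have hz : (n'.choose (2 * i') * (catalan i' * (n' - 2 * i').choose j)) = 0 := by
      by_cases h2 : 2 * i' ≤ n'
      · have : (n' - 2 * i').choose j = 0 := Nat.choose_eq_zero_of_lt (by omega)
        rw [this]; ring
      · have : n'.choose (2 * i') = 0 := Nat.choose_eq_zero_of_lt (by omega)
        rw [this]; ring
    rw [hz]
    by_cases hi0 : i' = 0
    · subst hi0
      have : (n' - 0).choose j = 0 := Nat.choose_eq_zero_of_lt (by omega)
      rw [show n' - 0 = n' from by omega] at this ⊢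
      rw [this]
      push_cast
      ring
    · have : (n' - i' - j).choose i' = 0 := Nat.choose_eq_zero_of_lt (by omega)
      rw [this]
      push_cast
      ring
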